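/- (Isolation Lemma) Let U be a finite set and F a nonempty family of subsets of U. If each u ∈ U independently receives a weight w(u) chosen uniformly at random from {1, ..., N}, then the probability that there is a unique set S' ∈ F of minimum total weight (w isolates F) is at least 1 − |U|/N. -/

import Mathlib

open Finset

section IsolationAux

variable {U : Type*}

/-- `S` is a minimum-weight member of `F` under weight `w`. -/
private def IsMinSet (F : Set (Finset U)) (w : U → ℕ) (S : Finset U) : Prop :=
  S ∈ F ∧ ∀ T ∈ F, ∑ x ∈ S, w x ≤ ∑ x ∈ T, w x

private lemma exists_minSet (F : Set (Finset U)) (hF : F.Nonempty) (w : U → ℕ) :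
    ∃ S, IsMinSet F w S := by
  obtain ⟨S, hS, hSm⟩ := Nat.sInf_mem (hF.image (fun S => ∑ x ∈ S, w x))
  exact ⟨S, hS, fun T hT => hSm.trans_le (Nat.sInf_le ⟨T, hT, rfl⟩)⟩

/-- `u` is ambiguous: some min set contains it, some min set omits it. -/
private def Amb (F : Set (Finset U)) (w : U → ℕ) (u : U) : Prop :=
  (∃ S, IsMinSet F w S ∧ u ∈ S) ∧ (∃ T, IsMinSet F w T ∧ u ∉ T)

private lemma isolates_of_no_amb (F : Set (Finset U)) (hF : F.Nonempty) (w : U → ℕ)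
    (h : ∀ u, ¬ Amb F w u) :
    ∃! S', S' ∈ F ∧ ∀ S ∈ F, ∑ x ∈ S', w x ≤ ∑ x ∈ S, w x := by
  obtain ⟨S, hS⟩ := exists_minSet F hF w
  refine ⟨S, hS, ?_⟩
  rintro T hT
  by_contra hne
  have hne' : ¬ ∀ a, a ∈ T ↔ a ∈ S := fun hh => hne (Finset.ext hh)
  push_neg at hne'
  obtain ⟨a, ha⟩ := hne'
  rcases ha with ⟨haT, haS⟩ | ⟨haT, haS⟩
  · exact h a ⟨⟨T, hT, haT⟩, ⟨S, hS, haS⟩⟩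
  · exact h a ⟨⟨S, hS, haS⟩, ⟨T, hT, haT⟩⟩

/-- If `u` is ambiguous under two weights agreeing off `u`, the weights agree at `u`. -/
private lemma amb_det (F : Set (Finset U)) {w w' : U → ℕ} {u : U}
    (hw : Amb F w u) (hw' : Amb F w' u) (hagree : ∀ v, v ≠ u → w v = w' v) :
    w u = w' u := by
  classical
  obtain ⟨⟨S, hS, huS⟩, ⟨T, hT, huT⟩⟩ := hw
  obtain ⟨⟨S', hS', huS'⟩, ⟨T', hT', huT'⟩⟩ := hw'
  have agreeOn : ∀ A : Finset U, u ∉ A → ∑ x ∈ A, w x = ∑ x ∈ A, w' x :=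
    fun A hA => Finset.sum_congr rfl fun x hx => hagree x (fun h => hA (h ▸ hx))
  -- the two minima agree
  have hmm' : ∑ x ∈ S, w x = ∑ x ∈ S', w' x := by
    have h1 : ∑ x ∈ S, w x ≤ ∑ x ∈ T', w x := hS.2 T' hT'.1
    have h2 : ∑ x ∈ T', w x = ∑ x ∈ T', w' x := agreeOn T' huT'
    have h3 : ∑ x ∈ T', w' x = ∑ x ∈ S', w' x :=
      le_antisymm (hT'.2 S' hS'.1) (hS'.2 T' hT'.1)
    have h4 : ∑ x ∈ S', w' x ≤ ∑ x ∈ T, w' x := hS'.2 T hT.1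
    have h5 : ∑ x ∈ T, w' x = ∑ x ∈ T, w x := (agreeOn T huT).symm
    have h6 : ∑ x ∈ T, w x = ∑ x ∈ S, w x :=
      le_antisymm (hT.2 S hS.1) (hS.2 T hT.1)
    omega
  have eS : w u + ∑ x ∈ S.erase u, w x = ∑ x ∈ S, w x :=
    Finset.add_sum_erase _ _ huS
  have eS' : w' u + ∑ x ∈ S'.erase u, w' x = ∑ x ∈ S', w' x :=
    Finset.add_sum_erase _ _ huS'
  have eSw' : w' u + ∑ x ∈ S.erase u, w' x = ∑ x ∈ S, w' x :=
    Finset.add_sum_erase _ _ huS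
  have eS'w : w u + ∑ x ∈ S'.erase u, w x = ∑ x ∈ S', w x :=
    Finset.add_sum_erase _ _ huS'
  have aS : ∑ x ∈ S.erase u, w x = ∑ x ∈ S.erase u, w' x :=
    agreeOn _ (Finset.notMem_erase u S)
  have aS' : ∑ x ∈ S'.erase u, w x = ∑ x ∈ S'.erase u, w' x :=
    agreeOn _ (Finset.notMem_erase u S')
  have m1 : ∑ x ∈ S', w' x ≤ ∑ x ∈ S, w' x := hS'.2 S hS.1
  have m2 : ∑ x ∈ S, w x ≤ ∑ x ∈ S', w x := hS.2 S' hS'.1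
  omega

end IsolationAux

/-- Isolation Lemma: if each element of a finite universe `U` receives a weight
chosen uniformly and independently at random from `{1, ..., N}`, then for any
nonempty family `F` of subsets of `U`, the probability that there is a unique
member of `F` of minimum total weight is at least `1 - |U| / N`. -/
theorem stmt4 {U : Type*} [Fintype U] (N : ℕ) (hN : 0 < N)
    (F : Set (Finset U)) (hF : F.Nonempty) :
    (1 : ℚ) - (Fintype.card U : ℚ) / N ≤
      (Nat.card {w : U → ↥(Finset.Icc 1 N) |
          ∃! S', S' ∈ F ∧ ∀ S ∈ F, (∑ u ∈ S', (w u : ℕ)) ≤ ∑ u ∈ S, (w u : ℕ)} : ℚ) /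
        (N : ℚ) ^ Fintype.card U := by
  classical
  set n := Fintype.card U with hn
  set W := (U → ↥(Finset.Icc 1 N)) with hW
  have hcardW : Fintype.card W = N ^ n := by
    show Fintype.card (U → ↥(Finset.Icc 1 N)) = N ^ n
    rw [Fintype.card_fun, Fintype.card_coe, Nat.card_Icc, Nat.add_sub_cancel, hn]
  -- translate Nat.card of a set to a filter card
  have natcard_eq : ∀ (Q : W → Prop), Nat.card {w : W | Q w} = (univ.filter Q).card := by
    intro Q
    have : {w : W | Q w} = ↑(univ.filter Q) := by ext w; simp
    rw [this, Nat.card_coe_set_eq, Set.ncard_coe_finset]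
  set P : W → Prop := fun w =>
    ∃! S', S' ∈ F ∧ ∀ S ∈ F, (∑ u ∈ S', (w u : ℕ)) ≤ ∑ u ∈ S, (w u : ℕ) with hP
  -- counting ambiguous weight functions for a fixed u
  have card_amb : ∀ u : U,
      (univ.filter (fun w : W => Amb F (fun v => (w v : ℕ)) u)).card ≤ N ^ (n - 1) := by
    intro u
    have hinj : Function.Injective
        (fun (w : {w : W // Amb F (fun v => (w v : ℕ)) u}) =>
          (fun v : {v : U // v ≠ u} => w.1 v.1)) := by
      rintro ⟨w, hw⟩ ⟨w', hw'⟩ h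
      have hagree : ∀ v, v ≠ u → ((w v : ℕ)) = ((w' v : ℕ)) := fun v hv =>
        congrArg Subtype.val (congrFun h ⟨v, hv⟩)
      have hu : ((w u : ℕ)) = ((w' u : ℕ)) := amb_det F hw hw' hagree
      refine Subtype.ext (funext fun v => Subtype.ext ?_)
      by_cases hv : v = u
      · subst hv; exact hu
      · exact hagree v hv
    have h1 : Fintype.card {w : W // Amb F (fun v => (w v : ℕ)) u}
        ≤ Fintype.card ({v : U // v ≠ u} → ↥(Finset.Icc 1 N)) :=
      Fintype.card_le_of_injective _ hinj
    have hcs : Fintype.card {v : U // v ≠ u} = n - 1 := by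
      have h0 := Fintype.card_subtype_compl (fun v : U => v = u)
      rw [Fintype.card_subtype_eq] at h0
      rw [hn]
      exact h0
    have h2 : Fintype.card ({v : U // v ≠ u} → ↥(Finset.Icc 1 N)) = N ^ (n - 1) := by
      rw [Fintype.card_fun, Fintype.card_coe, Nat.card_Icc, Nat.add_sub_cancel, hcs]
    have h3 : (univ.filter (fun w : W => Amb F (fun v => (w v : ℕ)) u)).card
        = Fintype.card {w : W // Amb F (fun v => (w v : ℕ)) u} := by
      rw [Fintype.card_subtype]
    exact h3.trans_le (le_of_le_of_eq h1 h2)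
  -- non-isolating weights are covered by ambiguity
  have hsubset : univ.filter (fun w : W => ¬ P w) ⊆
      univ.biUnion (fun u : U => univ.filter (fun w : W => Amb F (fun v => (w v : ℕ)) u)) := by
    intro w hw
    simp only [mem_filter, mem_univ, true_and] at hw
    have : ¬ ∀ u, ¬ Amb F (fun v => (w v : ℕ)) u := fun h =>
      hw (isolates_of_no_amb F hF _ h)
    push_neg at this
    obtain ⟨u, hu⟩ := this
    simp only [mem_biUnion, mem_filter, mem_univ, true_and]
    exact ⟨u, hu⟩
  have hbad : (univ.filter (fun w : W => ¬ P w)).card ≤ n * N ^ (n - 1) := by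
    calc (univ.filter (fun w : W => ¬ P w)).card
        ≤ (univ.biUnion (fun u : U =>
            univ.filter (fun w : W => Amb F (fun v => (w v : ℕ)) u))).card :=
          Finset.card_le_card hsubset
      _ ≤ ∑ u : U, (univ.filter (fun w : W => Amb F (fun v => (w v : ℕ)) u)).card :=
          Finset.card_biUnion_le
      _ ≤ ∑ _u : U, N ^ (n - 1) := Finset.sum_le_sum fun u _ => card_amb u
      _ = n * N ^ (n - 1) := by rw [Finset.sum_const, Finset.card_univ, smul_eq_mul]
  have hsplit : (univ.filter P).card + (univ.filter (fun w : W => ¬ P w)).card = N ^ n := by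
    rw [Finset.card_filter_add_card_filter_not, Finset.card_univ, hcardW]
  have hgood : Nat.card {w : W | P w} = (univ.filter P).card := natcard_eq P
  rw [hgood]
  set g := (univ.filter P).card with hg
  set b := (univ.filter (fun w : W => ¬ P w)).card with hb
  have hN0 : (N : ℚ) ≠ 0 := by positivity
  have hNn0 : (0 : ℚ) < (N : ℚ) ^ n := by positivity
  rw [le_div_iff₀ hNn0]
  have key : (n : ℚ) * (N : ℚ) ^ (n - 1) ≤ (n : ℚ) / N * (N : ℚ) ^ n := by
    rcases Nat.eq_zero_or_pos n with h | h
    · simp [h]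
    · have hpow : (N : ℚ) ^ n = (N : ℚ) ^ (n - 1) * N := by
        rw [← pow_succ]; congr 1; omega
      rw [hpow]
      apply le_of_eq
      field_simp
    
  have hgQ : (g : ℚ) = (N : ℚ) ^ n - (b : ℚ) := by
    have := hsplit
    have : (g : ℚ) + (b : ℚ) = ((N : ℚ)) ^ n := by exact_mod_cast congrArg (Nat.cast : ℕ → ℚ) this
    linarith
  have hbQ : (b : ℚ) ≤ (n : ℚ) * (N : ℚ) ^ (n - 1) := by exact_mod_cast hbad
  have expand : (1 - (n : ℚ) / N) * (N : ℚ) ^ n = (N : ℚ) ^ n - (n : ℚ) / N * (N : ℚ) ^ n := by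
    ring
  linarith
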